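/- arXiv:2502.01255 — 4 statements merged into one kernel-verified Lean document; each statement's English description precedes it below -/
import Mathlib

section
/- Let X have the HLG distribution with parameter θ ∈ (0,1). Then for real t with −1 < t < 1, the moment generating function satisfies E[e^{tX}] = (2/(2−θ)) · (θ/(2−θ))^{−t} · B(1 − θ/2; 1−t, 1+t), where B(z; a, b) = ∫₀^z u^{a−1}(1−u)^{b−1} du is the incomplete beta function. -/
open MeasureTheory Real

/-- The incomplete beta function `B(z; a, b) = ∫₀^z u^(a-1) (1-u)^(b-1) du`. -/
noncomputable def incBeta (z a b : ℝ) : ℝ :=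
  ∫ u in (0 : ℝ)..z, u ^ (a - 1) * (1 - u) ^ (b - 1)

theorem hlg_mgf (θ : ℝ) (hθ0 : 0 < θ) (hθ1 : θ < 1) (t : ℝ) (ht1 : -1 < t) (ht2 : t < 1) :
    ∫ x in Set.Ioi (0 : ℝ),
        Real.exp (t * x) * (2 * θ * Real.exp (-x) / (θ + (2 - θ) * Real.exp (-x)) ^ 2) =
      (2 / (2 - θ)) * (θ / (2 - θ)) ^ (-t) * incBeta (1 - θ / 2) (1 - t) (1 + t) := by
  have hc0 : (0 : ℝ) < 2 - θ := by linarith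
  set c : ℝ := 2 - θ with hc
  set D : ℝ → ℝ := fun x => θ * Real.exp x + c with hDdef
  have hD : ∀ x, 0 < D x := fun x => by
    have := Real.exp_pos x; simp only [hDdef]; nlinarith
  set f : ℝ → ℝ := fun x => c / D x with hfdef
  have hderiv : ∀ x, HasDerivAt f ((0 * D x - c * (θ * Real.exp x)) / D x ^ 2) x := by
    intro x
    have h1 : HasDerivAt D (θ * Real.exp x) x := by
      exact ((Real.hasDerivAt_exp x).const_mul θ).add_const c
    exact (hasDerivAt_const x c).div h1 (hD x).ne'
  have hinj : Set.InjOn f (Set.Ioi 0) := by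
    intro x _ y _ hxy
    have hx := hD x; have hy := hD y
    have hDeq : D x = D y := by
      simp only [hfdef] at hxy
      rw [div_eq_div_iff hx.ne' hy.ne'] at hxy
      exact (mul_left_cancel₀ hc0.ne' hxy).symm
    have : Real.exp x = Real.exp y := by
      simp only [hDdef] at hDeq; nlinarith
    exact Real.exp_injective this
  have himg : f '' Set.Ioi 0 = Set.Ioo 0 (c / 2) := by
    ext y
    constructor
    · rintro ⟨x, hx, rfl⟩
      have hx1 : (1 : ℝ) < Real.exp x := by
        calc (1 : ℝ) = Real.exp 0 := Real.exp_zero.symm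
        _ < Real.exp x := Real.exp_lt_exp.mpr hx
      have hDx := hD x
      have hD2 : (2 : ℝ) < D x := by
        simp only [hDdef, hc]; nlinarith
      refine ⟨by positivity, ?_⟩
      show c / D x < c / 2
      rw [div_lt_div_iff₀ hDx two_pos]
      nlinarith
    · rintro ⟨hy0, hy1⟩
      have hy2 : y < 1 := by rw [hc] at hy1; nlinarith
      have harg : (1 : ℝ) < c * (1 - y) / (θ * y) := by
        rw [lt_div_iff₀ (by positivity)]
        rw [hc] at hy1 ⊢; nlinarith
      refine ⟨Real.log (c * (1 - y) / (θ * y)), Real.log_pos harg, ?_⟩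
      have hexp : Real.exp (Real.log (c * (1 - y) / (θ * y))) = c * (1 - y) / (θ * y) :=
        Real.exp_log (by positivity)
      simp only [hfdef, hDdef, hexp]
      have hden2 : θ * (c * (1 - y) / (θ * y)) + c = c / y := by
        field_simp; ring
      rw [hden2, div_div_eq_mul_div, mul_comm, mul_div_assoc, div_self hc0.ne', mul_one]
  have hIoo : (1 : ℝ) - θ / 2 = c / 2 := by rw [hc]; ring
  have hbeta : incBeta (1 - θ / 2) (1 - t) (1 + t)
      = ∫ u in Set.Ioo (0 : ℝ) (c / 2), u ^ (-t) * (1 - u) ^ t := by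
    rw [incBeta, hIoo, intervalIntegral.integral_of_le (by positivity),
      MeasureTheory.integral_Ioc_eq_integral_Ioo]
    norm_num
  have key : (∫ u in Set.Ioo (0 : ℝ) (c / 2), u ^ (-t) * (1 - u) ^ t)
      = ∫ x in Set.Ioi (0 : ℝ),
          |(0 * D x - c * (θ * Real.exp x)) / D x ^ 2| •
            (f x ^ (-t) * (1 - f x) ^ t) := by
    rw [← himg]
    exact MeasureTheory.integral_image_eq_integral_abs_deriv_smul measurableSet_Ioi
      (fun x _ => (hderiv x).hasDerivWithinAt) hinj _
  have hpt : ∀ x : ℝ,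
      |(0 * D x - c * (θ * Real.exp x)) / D x ^ 2| • (f x ^ (-t) * (1 - f x) ^ t)
        = (c / 2 * (θ / c) ^ t) *
          (Real.exp (t * x) * (2 * θ * Real.exp (-x) / (θ + c * Real.exp (-x)) ^ 2)) := by
    intro x
    have hs : (0 : ℝ) < Real.exp x := Real.exp_pos x
    have hDx := hD x
    have hnum : 0 * D x - c * (θ * Real.exp x) = -(c * (θ * Real.exp x)) := by ring
    have habs : |(0 * D x - c * (θ * Real.exp x)) / D x ^ 2|
        = c * (θ * Real.exp x) / D x ^ 2 := by
      rw [hnum, abs_div, abs_neg, abs_of_pos (by positivity), abs_of_pos (by positivity)]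
    have h1f : (1 : ℝ) - f x = θ * Real.exp x / D x := by
      simp only [hfdef, hDdef]
      field_simp
      ring
    have hrp : f x ^ (-t) * (1 - f x) ^ t = θ ^ t * Real.exp (t * x) / c ^ t := by
      rw [h1f]
      show (c / D x) ^ (-t) * (θ * Real.exp x / D x) ^ t = _
      rw [Real.rpow_neg (by positivity), Real.div_rpow hc0.le hDx.le,
        Real.div_rpow (by positivity) hDx.le,
        Real.mul_rpow hθ0.le hs.le, ← Real.exp_mul, mul_comm x t]
      have hct : (0:ℝ) < c ^ t := Real.rpow_pos_of_pos hc0 t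
      have hDt : (0:ℝ) < D x ^ t := Real.rpow_pos_of_pos hDx t
      field_simp
    have hden : θ + c * Real.exp (-x) = D x * Real.exp (-x) := by
      rw [Real.exp_neg]
      simp only [hDdef]
      field_simp
    rw [smul_eq_mul, habs, hrp, hden]
    have hct : (0:ℝ) < c ^ t := Real.rpow_pos_of_pos hc0 t
    rw [Real.exp_neg, Real.div_rpow hθ0.le hc0.le]
    field_simp
  rw [hbeta, key]
  simp only [hpt]
  rw [MeasureTheory.integral_const_mul]
  have hprod : (θ / c) ^ (-t) * (θ / c) ^ t = 1 := by
    rw [← Real.rpow_add (by positivity)]; norm_num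
  set I := ∫ x in Set.Ioi (0 : ℝ),
      Real.exp (t * x) * (2 * θ * Real.exp (-x) / (θ + c * Real.exp (-x)) ^ 2) with hI
  calc I = ((θ / c) ^ (-t) * (θ / c) ^ t) * ((2 / c) * (c / 2)) * I := by
        rw [hprod]; field_simp
    _ = 2 / c * (θ / c) ^ (-t) * (c / 2 * (θ / c) ^ t * I) := by ring
end

section
/- For the HLG distribution with parameter θ ∈ (0,1), real γ > 0 and real t with t < γ, ∫₀^∞ e^{tx} F̄(x)^{γ−1} f(x) dx = (2/(2−θ))^γ (θ/(2−θ))^{−t} B(1 − θ/2; γ − t, 1 + t), where B(z; a, b) is the incomplete beta function. -/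
open MeasureTheory Real

theorem hlg_weighted_integral (θ : ℝ) (hθ0 : 0 < θ) (hθ1 : θ < 1)
    (γ t : ℝ) (hγ : 0 < γ) (ht : t < γ) :
    ∫ x in Set.Ioi (0 : ℝ),
        Real.exp (t * x) *
          (1 - θ * (1 - Real.exp (-x)) / (θ + (2 - θ) * Real.exp (-x))) ^ (γ - 1) *
          (2 * θ * Real.exp (-x) / (θ + (2 - θ) * Real.exp (-x)) ^ 2) =
      (2 / (2 - θ)) ^ γ * (θ / (2 - θ)) ^ (-t) * incBeta (1 - θ / 2) (γ - t) (1 + t) := by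
  have hc : (0:ℝ) < 2 - θ := by linarith
  have hz0 : (0:ℝ) < 1 - θ / 2 := by linarith
  set g : ℝ → ℝ := fun x => (2 - θ) * Real.exp (-x) / (θ + (2 - θ) * Real.exp (-x)) with hg
  have hApos : ∀ x : ℝ, 0 < θ + (2 - θ) * Real.exp (-x) := fun x => by positivity
  -- derivative
  have hderiv : ∀ x : ℝ, HasDerivAt g
      (-(θ * (2 - θ) * Real.exp (-x)) / (θ + (2 - θ) * Real.exp (-x)) ^ 2) x := by
    intro x
    have he : HasDerivAt (fun x : ℝ => Real.exp (-x)) (-Real.exp (-x)) x := by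
      simpa using ((hasDerivAt_id x).neg.exp)
    have h1 : HasDerivAt (fun x : ℝ => (2 - θ) * Real.exp (-x))
        ((2 - θ) * -Real.exp (-x)) x := he.const_mul _
    have h2 : HasDerivAt (fun x : ℝ => θ + (2 - θ) * Real.exp (-x))
        ((2 - θ) * -Real.exp (-x)) x := by simpa using (h1.const_add θ)
    have := h1.div h2 (ne_of_gt (hApos x))
    have hA := hApos x
    exact this.congr_deriv (by field_simp; ring)
  -- injectivity
  have hinj : Set.InjOn g (Set.Ioi (0:ℝ)) := by
    intro x hx y hy hxy
    simp only [hg] at hxy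
    have hAx := hApos x
    have hAy := hApos y
    have hex := Real.exp_pos (-x)
    have hey := Real.exp_pos (-y)
    rw [div_eq_div_iff (ne_of_gt hAx) (ne_of_gt hAy)] at hxy
    have h2 : (2 - θ) * θ * Real.exp (-x) = (2 - θ) * θ * Real.exp (-y) := by
      linear_combination hxy
    have hxy' : Real.exp (-x) = Real.exp (-y) :=
      mul_left_cancel₀ (by positivity) h2
    have := Real.exp_injective hxy'
    linarith
  -- image
  have himg : g '' Set.Ioi (0:ℝ) = Set.Ioo 0 (1 - θ / 2) := by
    ext u
    constructor
    · rintro ⟨x, hx, rfl⟩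
      have hex := Real.exp_pos (-x)
      have hA := hApos x
      have hlt : Real.exp (-x) < 1 := by
        rw [Real.exp_lt_one_iff]; simpa using hx
      constructor
      · simp only [hg]; positivity
      · simp only [hg]
        rw [div_lt_iff₀ hA]
        nlinarith [mul_pos (mul_pos hθ0 hc) (sub_pos.mpr hlt)]
    · rintro ⟨hu0, hu1⟩
      have hu1' : u < 1 := by linarith
      have hr : (1:ℝ) < (2 - θ) * (1 - u) / (θ * u) := by
        rw [lt_div_iff₀ (by positivity)]
        nlinarith
      refine ⟨Real.log ((2 - θ) * (1 - u) / (θ * u)), Real.log_pos hr, ?_⟩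
      have hrpos : (0:ℝ) < (2 - θ) * (1 - u) / (θ * u) := by positivity
      have h1u : (0:ℝ) < 1 - u := by linarith
      simp only [hg]
      rw [Real.exp_neg, Real.exp_log hrpos, inv_div]
      have hden_pos : 0 < θ + (2 - θ) * (θ * u / ((2 - θ) * (1 - u))) := by positivity
      rw [div_eq_iff (ne_of_gt hden_pos)]
      field_simp
      ring
  -- rewrite RHS as integral over Ioi 0
  have hrhs : incBeta (1 - θ / 2) (γ - t) (1 + t)
      = ∫ x in Set.Ioi (0:ℝ),
          |(-(θ * (2 - θ) * Real.exp (-x)) / (θ + (2 - θ) * Real.exp (-x)) ^ 2)| •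
            ((g x) ^ (γ - t - 1) * (1 - g x) ^ (1 + t - 1)) := by
    rw [incBeta, intervalIntegral.integral_of_le hz0.le, integral_Ioc_eq_integral_Ioo,
      ← himg]
    exact integral_image_eq_integral_abs_deriv_smul measurableSet_Ioi
      (fun x _ => (hderiv x).hasDerivWithinAt) hinj _
  rw [hrhs, ← integral_const_mul]
  apply setIntegral_congr_fun measurableSet_Ioi
  intro x hx
  have hex := Real.exp_pos (-x)
  have hA := hApos x
  have hAne := ne_of_gt hA
  -- simplify survival function
  have hsurv : 1 - θ * (1 - Real.exp (-x)) / (θ + (2 - θ) * Real.exp (-x))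
      = 2 * Real.exp (-x) / (θ + (2 - θ) * Real.exp (-x)) := by
    field_simp
    ring
  have habs : |(-(θ * (2 - θ) * Real.exp (-x)) / (θ + (2 - θ) * Real.exp (-x)) ^ 2)|
      = θ * (2 - θ) * Real.exp (-x) / (θ + (2 - θ) * Real.exp (-x)) ^ 2 := by
    rw [abs_div, abs_neg, abs_of_pos (by positivity), abs_of_pos (by positivity)]
  have h1g : 1 - g x = θ / (θ + (2 - θ) * Real.exp (-x)) := by
    simp only [hg]
    field_simp
    ring
  simp only [hsurv, habs, h1g, smul_eq_mul]
  simp only [hg]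
  -- now a pure rpow identity; take everything to exponentials
  have hgpos : 0 < (2 - θ) * Real.exp (-x) / (θ + (2 - θ) * Real.exp (-x)) := by positivity
  rw [Real.rpow_def_of_pos (by positivity : (0:ℝ) < 2 * Real.exp (-x) / (θ + (2 - θ) * Real.exp (-x))),
    Real.rpow_def_of_pos (by positivity : (0:ℝ) < 2 / (2 - θ)),
    Real.rpow_def_of_pos (by positivity : (0:ℝ) < θ / (2 - θ)),
    Real.rpow_def_of_pos hgpos,
    Real.rpow_def_of_pos (by positivity : (0:ℝ) < θ / (θ + (2 - θ) * Real.exp (-x)))]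
  rw [show (2 * θ * Real.exp (-x) / (θ + (2 - θ) * Real.exp (-x)) ^ 2)
      = Real.exp (Real.log (2 * θ * Real.exp (-x) / (θ + (2 - θ) * Real.exp (-x)) ^ 2)) from
      (Real.exp_log (by positivity)).symm,
    show (θ * (2 - θ) * Real.exp (-x) / (θ + (2 - θ) * Real.exp (-x)) ^ 2)
      = Real.exp (Real.log (θ * (2 - θ) * Real.exp (-x) / (θ + (2 - θ) * Real.exp (-x)) ^ 2)) from
      (Real.exp_log (by positivity)).symm]
  rw [← Real.exp_add, ← Real.exp_add, ← Real.exp_add, ← Real.exp_add, ← Real.exp_add,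
    ← Real.exp_add]
  congr 1
  have hθne := ne_of_gt hθ0
  have hcne := ne_of_gt hc
  have hexne := ne_of_gt hex
  have l1 : Real.log (2 * θ * Real.exp (-x)) = Real.log 2 + Real.log θ + (-x) := by
    rw [Real.log_mul (by positivity) hexne, Real.log_mul two_ne_zero hθne, Real.log_exp]
  have l2 : Real.log (θ * (2 - θ) * Real.exp (-x))
      = Real.log θ + Real.log (2 - θ) + (-x) := by
    rw [Real.log_mul (by positivity) hexne, Real.log_mul hθne hcne, Real.log_exp]
  have l3 : Real.log ((θ + (2 - θ) * Real.exp (-x)) ^ 2)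
      = 2 * Real.log (θ + (2 - θ) * Real.exp (-x)) := by
    rw [Real.log_pow]; norm_num
  have l4 : Real.log ((2 - θ) * Real.exp (-x)) = Real.log (2 - θ) + (-x) := by
    rw [Real.log_mul hcne hexne, Real.log_exp]
  have l5 : Real.log (2 * Real.exp (-x)) = Real.log 2 + (-x) := by
    rw [Real.log_mul two_ne_zero hexne, Real.log_exp]
  rw [Real.log_div (by positivity) hAne, Real.log_div (by positivity) hAne,
    Real.log_div (by positivity) (by positivity : ((θ + (2 - θ) * Real.exp (-x)) ^ 2 : ℝ) ≠ 0),
    Real.log_div (by positivity) (by positivity : ((θ + (2 - θ) * Real.exp (-x)) ^ 2 : ℝ) ≠ 0),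
    Real.log_div two_ne_zero hcne, Real.log_div hθne hcne,
    Real.log_div hθne hAne, l1, l2, l3, l4, l5]
  ring
end

section
/- Let X_{1:n} ≤ ... ≤ X_{n:n} be order statistics from n i.i.d. HLG(θ) random variables. The moment generating function of the r-th order statistic satisfies, for |t| small enough, M_{r:n}(t) = (n!/((r−1)!(n−r)!)) Σ_{u=0}^{r−1} (−1)^u C(r−1,u) (2/(2−θ))^{n−r+u+1} (θ/(2−θ))^{−t} B(1 − θ/2; n−r+u+1−t, 1+t). -/
open MeasureTheory Real

/-- The HLG(θ) cdf. -/
noncomputable def hlgCdf (θ x : ℝ) : ℝ :=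
  θ * (1 - Real.exp (-x)) / (θ + (2 - θ) * Real.exp (-x))

/-- The HLG(θ) pdf. -/
noncomputable def hlgPdf (θ x : ℝ) : ℝ :=
  2 * θ * Real.exp (-x) / (θ + (2 - θ) * Real.exp (-x)) ^ 2

open Finset Set

section
variable (θ t : ℝ) (hθ0 : 0 < θ) (hθ1 : θ < 1)

noncomputable def Dd (θ x : ℝ) : ℝ := θ * Real.exp x + (2 - θ)
noncomputable def phi (θ x : ℝ) : ℝ := (2 - θ) / Dd θ x

include hθ0 hθ1

lemma Dd_pos (x : ℝ) : 0 < Dd θ x := by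
  have := Real.exp_pos x
  unfold Dd; nlinarith

lemma phi_mem (x : ℝ) (hx : 0 < x) : phi θ x ∈ Ioo (0:ℝ) (1 - θ/2) := by
  have hD := Dd_pos θ hθ0 hθ1 x
  have hE : 1 < Real.exp x := by simpa using Real.exp_lt_exp.2 hx
  constructor
  · exact div_pos (by linarith) hD
  · unfold phi
    rw [div_lt_iff₀ hD]
    have h2θ' : (0:ℝ) < 2 - θ := by linarith
    unfold Dd
    nlinarith [mul_pos (mul_pos hθ0 h2θ') (sub_pos.2 hE)]

lemma phi_image : phi θ '' Ioi 0 = Ioo (0:ℝ) (1 - θ/2) := by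
  apply Set.Subset.antisymm
  · rintro _ ⟨x, hx, rfl⟩; exact phi_mem θ hθ0 hθ1 x hx
  · rintro y ⟨hy0, hy1⟩
    have hθ' : θ ≠ 0 := ne_of_gt hθ0
    have hy' : y ≠ 0 := ne_of_gt hy0
    have h2θ : (2:ℝ) - θ ≠ 0 := by linarith
    refine ⟨Real.log ((2-θ)*(1-y)/(θ*y)), ?_, ?_⟩
    · have h1 : 0 < θ * y := by positivity
      have h2 : θ * y < (2-θ)*(1-y) := by nlinarith
      exact Real.log_pos ((one_lt_div h1).2 h2)
    · have h1 : 0 < θ * y := by positivity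
      have h2 : 0 < (2-θ)*(1-y) := by nlinarith
      have hexp := Real.exp_log (show (0:ℝ) < (2-θ)*(1-y)/(θ*y) by positivity)
      unfold phi Dd
      rw [hexp]
      have hden : θ * ((2-θ)*(1-y)/(θ*y)) + (2-θ) = (2-θ)/y := by field_simp; ring
      rw [hden]
      field_simp
lemma phi_inj : Set.InjOn (phi θ) (Ioi 0) := by
  intro a ha b hb hab
  have hDa := Dd_pos θ hθ0 hθ1 a
  have hDb := Dd_pos θ hθ0 hθ1 b
  have h2θ : (0:ℝ) < 2 - θ := by linarith
  unfold phi at hab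
  have hD : Dd θ a = Dd θ b := by
    rw [div_eq_div_iff (ne_of_gt hDa) (ne_of_gt hDb)] at hab
    exact (mul_left_cancel₀ (ne_of_gt h2θ) hab).symm
  have : Real.exp a = Real.exp b := by
    unfold Dd at hD
    have hθ' : θ ≠ 0 := ne_of_gt hθ0
    nlinarith [hD]
  exact Real.exp_injective this

lemma phi_deriv (x : ℝ) :
    HasDerivAt (phi θ) (-((2-θ) * (θ * Real.exp x)) / (Dd θ x)^2) x := by
  have hD := Dd_pos θ hθ0 hθ1 x
  have hd : HasDerivAt (fun x => Dd θ x) (θ * Real.exp x) x := by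
    unfold Dd
    simpa using ((Real.hasDerivAt_exp x).const_mul θ).add_const (2-θ)
  have h := (hd.inv (ne_of_gt hD)).const_mul (2-θ)
  have heq : ∀ y, (2-θ) * (Dd θ y)⁻¹ = phi θ y := by intro y; rw [phi, div_eq_mul_inv]
  rw [show phi θ = fun y => (2-θ) * (Dd θ y)⁻¹ from funext fun y => (heq y).symm]
  have h' : HasDerivAt (fun y => (2-θ) * (Dd θ y)⁻¹) ((2 - θ) * (-(θ * Real.exp x) / Dd θ x ^ 2)) x := h
  convert h' using 1
  show _ = (2-θ) * (-(θ * Real.exp x) / (Dd θ x)^2); ring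
end

section
variable (θ t : ℝ) (hθ0 : 0 < θ) (hθ1 : θ < 1) (ht : |t| < 1/2)

include hθ0 hθ1 ht

lemma pointwise_eq (k : ℕ) (x : ℝ) (hx : x ∈ Ioi (0:ℝ)) :
    Real.exp (t*x) * ((2/Dd θ x)^k * (2*θ*Real.exp x/(Dd θ x)^2)) =
    ((2/(2-θ))^(k+1) * (θ/(2-θ))^(-t)) *
      (|(-((2-θ) * (θ * Real.exp x)) / (Dd θ x)^2)| *
        ((phi θ x)^((k:ℝ)-t) * (1 - phi θ x)^t)) := by
  have hD := Dd_pos θ hθ0 hθ1 x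
  have hE := Real.exp_pos x
  have h2θ : (0:ℝ) < 2 - θ := by linarith
  have hφ := phi_mem θ hθ0 hθ1 x hx
  have hφ0 : 0 < phi θ x := hφ.1
  have h1φ : 1 - phi θ x = θ * Real.exp x / Dd θ x := by
    unfold phi Dd
    field_simp; ring
  have h1φ0 : 0 < 1 - phi θ x := by rw [h1φ]; positivity
  -- abs
  have habs : |(-((2-θ) * (θ * Real.exp x)) / (Dd θ x)^2)| =
      (2-θ) * (θ * Real.exp x) / (Dd θ x)^2 := by
    rw [abs_div, abs_neg, abs_of_pos (by positivity), abs_of_pos (by positivity)]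
  -- rpow split
  have hsplit : (phi θ x)^((k:ℝ)-t) * (1 - phi θ x)^t
      = (phi θ x)^k * ((θ/(2-θ))^t * Real.exp (t*x)) := by
    rw [sub_eq_add_neg, Real.rpow_add hφ0, Real.rpow_natCast]
    rw [mul_assoc, Real.rpow_neg hφ0.le, ← Real.inv_rpow hφ0.le,
      ← Real.mul_rpow (by positivity) h1φ0.le]
    congr 1
    have : (phi θ x)⁻¹ * (1 - phi θ x) = θ / (2-θ) * Real.exp x := by
      rw [h1φ]; unfold phi; field_simp
    rw [this, Real.mul_rpow (by positivity) hE.le]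
    congr 1
    rw [Real.rpow_def_of_pos hE, Real.log_exp, mul_comm]
  rw [habs, hsplit]
  have hrpow : (θ/(2-θ))^(-t) * (θ/(2-θ))^t = 1 := by
    rw [← Real.rpow_add (by positivity)]
    simp
  have hφk : (phi θ x)^k = ((2-θ)/Dd θ x)^k := rfl
  rw [hφk]
  nth_rewrite 1 [← mul_one (Real.exp (t*x))]
  rw [← hrpow]
  simp only [div_pow]
  field_simp
  ring
end

section
variable (θ t : ℝ) (hθ0 : 0 < θ) (hθ1 : θ < 1) (ht : |t| < 1/2)

include hθ0 hθ1 ht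

lemma g_int (k : ℕ) :
    IntegrableOn (fun u : ℝ => u^((k:ℝ)-t) * (1-u)^t) (Ioo 0 (1-θ/2)) := by
  have hc : (0:ℝ) < 1 - θ/2 := by linarith
  have hmeas : AEStronglyMeasurable (fun u : ℝ => u^((k:ℝ)-t) * (1-u)^t)
      (volume.restrict (Ioo 0 (1-θ/2))) := by
    refine ContinuousOn.aestronglyMeasurable ?_ measurableSet_Ioo
    exact (continuousOn_id.rpow_const (fun x hx => Or.inl (ne_of_gt hx.1))).mul
      ((continuousOn_const.sub continuousOn_id).rpow_const
        (fun x hx => Or.inl (by intro h; change 1 - x = 0 at h; have := hx.2; nlinarith [hx.1, hθ1])))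
  have hmaj : IntegrableOn (fun u : ℝ => (2/θ)^|t| * u^((k:ℝ)-t)) (Ioo 0 (1-θ/2)) := by
    apply Integrable.const_mul
    have h1 : IntervalIntegrable (fun u : ℝ => u^((k:ℝ)-t)) volume 0 (1-θ/2) := by
      apply intervalIntegral.intervalIntegrable_rpow'
      have hk : (0:ℝ) ≤ (k:ℝ) := Nat.cast_nonneg k
      nlinarith [(abs_lt.1 ht).2, neg_abs_le t]
    rw [intervalIntegrable_iff, uIoc_of_le hc.le] at h1
    exact h1.mono_set Ioo_subset_Ioc_self
  apply hmaj.integrable.mono hmeas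
  rw [ae_restrict_iff' measurableSet_Ioo]
  filter_upwards with u hu
  have hu0 := hu.1
  have hu1 := hu.2
  have h1u : θ/2 < 1 - u := by linarith
  have h1u0 : (0:ℝ) < 1 - u := by linarith
  have h1u1 : 1 - u < 1 := by linarith
  have hbound : (1-u)^t ≤ (2/θ)^|t| := by
    rw [Real.rpow_def_of_pos h1u0, Real.rpow_def_of_pos (by positivity)]
    apply Real.exp_le_exp.2
    have hlogneg : Real.log (1-u) < 0 := Real.log_neg h1u0 h1u1
    have hlog2θ : |Real.log (1-u)| ≤ Real.log (2/θ) := by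
      rw [abs_of_neg hlogneg, ← Real.log_inv]
      apply Real.log_le_log (by positivity)
      rw [inv_le_comm₀ h1u0 (by positivity), inv_div]
      linarith
    calc Real.log (1-u) * t ≤ |Real.log (1-u) * t| := le_abs_self _
      _ = |Real.log (1-u)| * |t| := abs_mul _ _
      _ ≤ Real.log (2/θ) * |t| := mul_le_mul_of_nonneg_right hlog2θ (abs_nonneg t)
  rw [Real.norm_eq_abs, Real.norm_eq_abs, abs_mul]
  rw [abs_of_nonneg (Real.rpow_nonneg hu0.le _), abs_of_nonneg (Real.rpow_nonneg h1u0.le _),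
    abs_of_nonneg (by positivity)]
  exact mul_le_mul_of_nonneg_left hbound (Real.rpow_nonneg hu0.le _) |>.trans
    (le_of_eq (mul_comm _ _))
end

section
variable (θ t : ℝ) (hθ0 : 0 < θ) (hθ1 : θ < 1) (ht : |t| < 1/2)

include hθ0 hθ1 ht

lemma key_int (k : ℕ) :
    IntegrableOn (fun x => Real.exp (t*x) * ((2/Dd θ x)^k * (2*θ*Real.exp x/(Dd θ x)^2)))
      (Ioi (0:ℝ)) := by
  have h1 : IntegrableOn (fun u : ℝ => u^((k:ℝ)-t) * (1-u)^t) (phi θ '' Ioi 0) := by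
    rw [phi_image θ hθ0 hθ1]; exact g_int θ t hθ0 hθ1 ht k
  rw [integrableOn_image_iff_integrableOn_abs_deriv_smul measurableSet_Ioi
    (fun x _ => (phi_deriv θ hθ0 hθ1 x).hasDerivWithinAt) (phi_inj θ hθ0 hθ1)] at h1
  have h2 : IntegrableOn (fun x => ((2/(2-θ))^(k+1) * (θ/(2-θ))^(-t)) *
      (|(-((2-θ) * (θ * Real.exp x)) / (Dd θ x)^2)| *
        ((phi θ x)^((k:ℝ)-t) * (1 - phi θ x)^t))) (Ioi (0:ℝ)) := by
    simpa [smul_eq_mul, mul_assoc, IntegrableOn] using h1.const_mul ((2/(2-θ))^(k+1) * (θ/(2-θ))^(-t))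
  apply IntegrableOn.congr_fun h2 _ measurableSet_Ioi
  intro x hx
  exact (pointwise_eq θ t hθ0 hθ1 ht k x hx).symm

lemma key_eq (k : ℕ) :
    ∫ x in Ioi (0:ℝ), Real.exp (t*x) * ((2/Dd θ x)^k * (2*θ*Real.exp x/(Dd θ x)^2))
    = (2/(2-θ))^(k+1) * (θ/(2-θ))^(-t) * incBeta (1-θ/2) ((k+1:ℕ)-t) (1+t) := by
  have hc : (0:ℝ) < 1 - θ/2 := by linarith
  calc ∫ x in Ioi (0:ℝ), Real.exp (t*x) * ((2/Dd θ x)^k * (2*θ*Real.exp x/(Dd θ x)^2))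
      = ∫ x in Ioi (0:ℝ), ((2/(2-θ))^(k+1) * (θ/(2-θ))^(-t)) *
          (|(-((2-θ) * (θ * Real.exp x)) / (Dd θ x)^2)| *
            ((phi θ x)^((k:ℝ)-t) * (1 - phi θ x)^t)) :=
        setIntegral_congr_fun measurableSet_Ioi (fun x hx => pointwise_eq θ t hθ0 hθ1 ht k x hx)
    _ = ((2/(2-θ))^(k+1) * (θ/(2-θ))^(-t)) *
          ∫ x in Ioi (0:ℝ), |(-((2-θ) * (θ * Real.exp x)) / (Dd θ x)^2)| *
            ((phi θ x)^((k:ℝ)-t) * (1 - phi θ x)^t) := MeasureTheory.integral_const_mul _ _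
    _ = ((2/(2-θ))^(k+1) * (θ/(2-θ))^(-t)) *
          ∫ u in phi θ '' Ioi 0, u^((k:ℝ)-t) * (1-u)^t := by
        rw [integral_image_eq_integral_abs_deriv_smul measurableSet_Ioi
          (fun x _ => (phi_deriv θ hθ0 hθ1 x).hasDerivWithinAt) (phi_inj θ hθ0 hθ1)
          (fun u => u^((k:ℝ)-t) * (1-u)^t)]
        simp [smul_eq_mul]
    _ = (2/(2-θ))^(k+1) * (θ/(2-θ))^(-t) * incBeta (1-θ/2) ((k+1:ℕ)-t) (1+t) := by
        rw [phi_image θ hθ0 hθ1]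
        congr 1
        unfold incBeta
        rw [intervalIntegral.integral_of_le hc.le, ← integral_Ioc_eq_integral_Ioo]
        congr 1
        ext u
        congr 2
        · push_cast; ring
        · ring
end

lemma one_sub_pow_expand (v : ℝ) (m : ℕ) :
    (1-v)^m = ∑ u ∈ Finset.range (m+1), (-1:ℝ)^u * (m.choose u) * v^u := by
  rw [sub_eq_add_neg, add_comm, add_pow]
  refine Finset.sum_congr rfl fun u hu => ?_
  rw [neg_pow]; ring

lemma hlgCdf_eq (θ x : ℝ) (hθ0 : 0 < θ) (hθ1 : θ < 1) :
    hlgCdf θ x = 1 - 2 / Dd θ x := by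
  have hD := Dd_pos θ hθ0 hθ1 x
  have hE := Real.exp_pos x
  have hE' := Real.exp_pos (-x)
  have hden : θ + (2 - θ) * Real.exp (-x) = Real.exp (-x) * Dd θ x := by
    unfold Dd
    rw [mul_add, ← mul_assoc, mul_comm (Real.exp (-x)) θ, mul_assoc θ]
    rw [← Real.exp_add]
    simp
    ring
  unfold hlgCdf
  rw [hden]
  have hexp : Real.exp (-x) * Real.exp x = 1 := by rw [← Real.exp_add]; simp
  field_simp
  unfold Dd
  linear_combination (-θ) * hexp

lemma hlgPdf_eq (θ x : ℝ) (hθ0 : 0 < θ) (hθ1 : θ < 1) :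
    hlgPdf θ x = 2*θ*Real.exp x/(Dd θ x)^2 := by
  have hD := Dd_pos θ hθ0 hθ1 x
  have hE' := Real.exp_pos (-x)
  have hden : θ + (2 - θ) * Real.exp (-x) = Real.exp (-x) * Dd θ x := by
    unfold Dd
    rw [mul_add, ← mul_assoc, mul_comm (Real.exp (-x)) θ, mul_assoc θ]
    rw [← Real.exp_add]
    simp
    ring
  have hexp : Real.exp (-x) * Real.exp x = 1 := by rw [← Real.exp_add]; simp
  unfold hlgPdf
  rw [hden, mul_pow]
  rw [div_eq_div_iff (by positivity) (by positivity)]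
  linear_combination (-(2*θ*Real.exp (-x) * Dd θ x^2)) * hexp

theorem hlg_order_statistic_mgf (θ : ℝ) (hθ0 : 0 < θ) (hθ1 : θ < 1)
    (n r : ℕ) (hr : 1 ≤ r) (hrn : r ≤ n) :
    ∃ ε > (0 : ℝ), ∀ t : ℝ, |t| < ε →
      ∫ x in Set.Ioi (0 : ℝ),
          Real.exp (t * x) *
            ((Nat.factorial n / (Nat.factorial (r - 1) * Nat.factorial (n - r)) : ℝ) *
              hlgCdf θ x ^ (r - 1) * (1 - hlgCdf θ x) ^ (n - r) * hlgPdf θ x) =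
        (Nat.factorial n / (Nat.factorial (r - 1) * Nat.factorial (n - r)) : ℝ) *
          ∑ u ∈ Finset.range r,
            (-1 : ℝ) ^ u * (Nat.choose (r - 1) u : ℝ) *
              (2 / (2 - θ)) ^ (n - r + u + 1) * (θ / (2 - θ)) ^ (-t) *
              incBeta (1 - θ / 2) ((n - r + u + 1 : ℕ) - t) (1 + t) := by
  refine ⟨1/2, by norm_num, fun t ht => ?_⟩
  set C : ℝ := (Nat.factorial n / (Nat.factorial (r - 1) * Nat.factorial (n - r)) : ℝ) with hC
  have hrr : r - 1 + 1 = r := Nat.sub_add_cancel hr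
  have hstep : ∀ x ∈ Ioi (0:ℝ),
      Real.exp (t * x) * (C * hlgCdf θ x ^ (r - 1) * (1 - hlgCdf θ x) ^ (n - r) * hlgPdf θ x)
      = ∑ u ∈ Finset.range r, (C * ((-1:ℝ)^u * ((r-1).choose u))) *
          (Real.exp (t*x) * ((2/Dd θ x)^(n-r+u) * (2*θ*Real.exp x/(Dd θ x)^2))) := by
    intro x _
    rw [hlgCdf_eq θ x hθ0 hθ1, hlgPdf_eq θ x hθ0 hθ1]
    rw [show (1:ℝ) - (1 - 2 / Dd θ x) = 2 / Dd θ x by ring]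
    rw [one_sub_pow_expand (2 / Dd θ x) (r-1), hrr]
    rw [Finset.mul_sum, Finset.sum_mul, Finset.sum_mul, Finset.mul_sum]
    refine Finset.sum_congr rfl fun u hu => ?_
    rw [pow_add]
    ring
  rw [setIntegral_congr_fun measurableSet_Ioi hstep]
  rw [integral_finset_sum _ (fun u _ =>
    ((key_int θ t hθ0 hθ1 ht (n-r+u)).const_mul (C * ((-1:ℝ)^u * ((r-1).choose u)))))]
  rw [Finset.mul_sum]
  refine Finset.sum_congr rfl fun u hu => ?_
  rw [MeasureTheory.integral_const_mul, key_eq θ t hθ0 hθ1 ht (n-r+u)]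
  ring
end

section
/- The HLG(θ) hazard rate h(x) = f(x)/F̄(x) = θ/(θ + (2−θ)e^{-x}) is strictly increasing on (0,∞) for 0 < θ < 1, with h(0⁺) = θ/2 and h(x) → 1 as x → ∞. -/
open Filter Set

theorem hlg_hazard_rate (θ : ℝ) (hθ0 : 0 < θ) (hθ1 : θ < 1) :
    (∀ x : ℝ, 0 < x →
      (2 * θ * Real.exp (-x) / (θ + (2 - θ) * Real.exp (-x)) ^ 2) /
          (2 * Real.exp (-x) / (θ + (2 - θ) * Real.exp (-x))) =
        θ / (θ + (2 - θ) * Real.exp (-x))) ∧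
    StrictMonoOn (fun x : ℝ => θ / (θ + (2 - θ) * Real.exp (-x))) (Set.Ioi 0) ∧
    Tendsto (fun x : ℝ => θ / (θ + (2 - θ) * Real.exp (-x)))
      (nhdsWithin 0 (Set.Ioi 0)) (nhds (θ / 2)) ∧
    Tendsto (fun x : ℝ => θ / (θ + (2 - θ) * Real.exp (-x))) atTop (nhds 1) := by
  have h2θ : 0 < 2 - θ := by linarith
  have hden : ∀ x : ℝ, 0 < θ + (2 - θ) * Real.exp (-x) := fun x => by
    have := Real.exp_pos (-x)
    positivity
  refine ⟨fun x _ => ?_, ?_, ?_, ?_⟩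
  · have h1 := (hden x).ne'
    have h2 := (Real.exp_pos (-x)).ne'
    field_simp
  · intro a _ b _ hab
    have h1 : θ + (2 - θ) * Real.exp (-b) < θ + (2 - θ) * Real.exp (-a) := by
      have := Real.exp_lt_exp.mpr (neg_lt_neg hab)
      nlinarith
    exact div_lt_div_of_pos_left hθ0 (hden b) h1
  · have hc : Continuous (fun x : ℝ => θ / (θ + (2 - θ) * Real.exp (-x))) := by
      apply Continuous.div continuous_const
      · exact continuous_const.add (continuous_const.mul (Real.continuous_exp.comp continuous_neg))
      · exact fun x => (hden x).ne'
    have := (hc.tendsto 0).mono_left (nhdsWithin_le_nhds (s := Set.Ioi (0:ℝ)))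
    simpa using this
  · have h1 : Tendsto (fun x : ℝ => θ + (2 - θ) * Real.exp (-x)) atTop (nhds θ) := by
      have : Tendsto (fun x : ℝ => Real.exp (-x)) atTop (nhds 0) := by
        simpa using Real.tendsto_exp_neg_atTop_nhds_zero
      have := (tendsto_const_nhds.add (tendsto_const_nhds.mul this) :
        Tendsto (fun x : ℝ => θ + (2 - θ) * Real.exp (-x)) atTop (nhds (θ + (2 - θ) * 0)))
      simpa using this
    have := Tendsto.div (tendsto_const_nhds : Tendsto (fun _ : ℝ => θ) atTop (nhds θ)) h1 hθ0.ne'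
    rw [div_self hθ0.ne'] at this
    exact this
end
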